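/- The derivative of H satisfies H'(z) = (2/(σ²z²)) · (rκ + (μ-r)z)/(w·s'(z)) · G(z) for all z ∈ (0,∞), where w = 2√(ν²+2(λ+r)/σ²) and s'(z) = z^{-2ν-1}. -/

import Mathlib

set_option maxHeartbeats 1000000

open Real Set

theorem stmt_4 (μ σ r lam κ c : ℝ) (hσ : 0 < σ) (hlam : 0 < lam) (hκ : 0 < κ) (hc : 0 ≤ c)
    (hlr : max μ 0 < lam + r)
    (ν : ℝ) (hν : ν = μ / σ ^ 2 - 1 / 2)
    (φ ψ F G s' H : ℝ → ℝ) (w : ℝ)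
    (hφ : ∀ x : ℝ, φ x = x ^ (-Real.sqrt (ν ^ 2 + 2 * (lam + r) / σ ^ 2) - ν))
    (hψ : ∀ x : ℝ, ψ x = x ^ (Real.sqrt (ν ^ 2 + 2 * (lam + r) / σ ^ 2) - ν))
    (hF : ∀ z : ℝ, F z = ((r - μ) / (lam + r - μ)) * z - r * κ / (lam + r))
    (hG : ∀ z : ℝ, G z = φ (κ + c) * ψ z - φ z * ψ (κ + c))
    (hw : w = 2 * Real.sqrt (ν ^ 2 + 2 * (lam + r) / σ ^ 2))
    (hs : ∀ z : ℝ, s' z = z ^ (-2 * ν - 1))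
    (hH : ∀ z : ℝ, H z = (deriv F z * G z - F z * deriv G z) / (w * s' z) + F (κ + c))
    (hr : 0 ≤ r) :
    ∀ z ∈ Set.Ioi (0 : ℝ),
      deriv H z = (2 / (σ ^ 2 * z ^ 2)) * ((r * κ + (μ - r) * z) / (w * s' z)) * G z := by
  have hσ2 : (0:ℝ) < σ ^ 2 := by positivity
  have hlr0 : 0 < lam + r := lt_of_le_of_lt (le_max_right μ 0) hlr
  have hμlt : μ < lam + r := lt_of_le_of_lt (le_max_left μ 0) hlr
  have hD : 0 < ν ^ 2 + 2 * (lam + r) / σ ^ 2 := by positivity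
  set θ := Real.sqrt (ν ^ 2 + 2 * (lam + r) / σ ^ 2) with hθdef
  have hθ0 : 0 < θ := Real.sqrt_pos.mpr hD
  have hθ2 : θ ^ 2 = ν ^ 2 + 2 * (lam + r) / σ ^ 2 := Real.sq_sqrt hD.le
  -- cleaned relations avoiding division
  have hθ2' : σ ^ 2 * θ ^ 2 = σ ^ 2 * ν ^ 2 + 2 * (lam + r) := by
    field_simp at hθ2 ⊢; linarith [hθ2]
  have hν' : σ ^ 2 * (2 * ν + 1) = 2 * μ := by
    rw [hν]; field_simp; ring
  have hw0 : w ≠ 0 := by rw [hw]; positivity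
  set a := (r - μ) / (lam + r - μ) with ha
  set b := r * κ / (lam + r) with hb
  set A := φ (κ + c) with hAdef
  set B := ψ (κ + c) with hBdef
  have hlm : lam + r - μ ≠ 0 := by linarith
  have hlr0' : lam + r ≠ 0 := ne_of_gt hlr0
  -- derivative of F
  have hFfun : F = fun z => a * z - b := funext fun z => hF z
  have hFder : ∀ z : ℝ, HasDerivAt F a z := by
    intro z
    rw [hFfun]
    simpa using ((hasDerivAt_id z).const_mul a).sub_const b
  -- G as explicit function
  have hGfun : ∀ x : ℝ, G x = A * x ^ (θ - ν) - x ^ (-θ - ν) * B := by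
    intro x; rw [hG, hψ, hφ]
  have hGder : ∀ x : ℝ, 0 < x →
      HasDerivAt G (A * ((θ - ν) * x ^ (θ - ν - 1)) - ((-θ - ν) * x ^ (-θ - ν - 1)) * B) x := by
    intro x hx
    have h1 := (Real.hasDerivAt_rpow_const (x := x) (p := θ - ν) (Or.inl hx.ne')).const_mul A
    have h2 := (Real.hasDerivAt_rpow_const (x := x) (p := -θ - ν) (Or.inl hx.ne')).mul_const B
    have := h1.sub h2
    refine HasDerivAt.congr_of_eventuallyEq this ?_
    filter_upwards with y using (hGfun y)
  -- explicit polynomial-like form of H on Ioi 0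
  set C := F (κ + c) with hCdef
  set c1 := a * A * (1 - θ + ν) with hc1
  set c2 := -(a * B * (1 + θ + ν)) with hc2
  set c3 := b * A * (θ - ν) with hc3
  set c4 := b * B * (θ + ν) with hc4
  set Hex : ℝ → ℝ := fun x =>
    (c1 * x ^ (θ + ν + 1) + c2 * x ^ (ν + 1 - θ) + c3 * x ^ (θ + ν) + c4 * x ^ (ν - θ)) / w + C
    with hHex
  have hHeq : EqOn H Hex (Ioi (0:ℝ)) := by
    intro x hx
    have hx0 : (0:ℝ) < x := hx
    have hxne : x ≠ 0 := hx0.ne'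
    have E : ∀ p q : ℝ, x ^ (p + q) = x ^ p * x ^ q := fun p q => Real.rpow_add hx0 p q
    have ES : ∀ p q : ℝ, x ^ (p - q) = x ^ p / x ^ q := fun p q => Real.rpow_sub hx0 p q
    have EN : ∀ p : ℝ, x ^ (-p) = (x ^ p)⁻¹ := fun p => Real.rpow_neg hx0.le p
    set P := x ^ θ with hP
    set Q := x ^ ν with hQ
    have hP0 : P ≠ 0 := (Real.rpow_pos_of_pos hx0 θ).ne'
    have hQ0 : Q ≠ 0 := (Real.rpow_pos_of_pos hx0 ν).ne'
    have es : s' x = (Q * Q * x)⁻¹ := by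
      rw [hs, show (-2 * ν - 1 : ℝ) = -ν + -ν + -1 by ring, E, E, EN, EN,
        Real.rpow_one, mul_inv, mul_inv]
    have e1 : x ^ (θ - ν) = P / Q := by rw [ES]
    have e2 : x ^ (-θ - ν) = P⁻¹ / Q := by rw [ES, EN]
    have e3 : x ^ (θ - ν - 1) = P / Q / x := by rw [ES, ES, Real.rpow_one]
    have e4 : x ^ (-θ - ν - 1) = P⁻¹ / Q / x := by rw [ES, ES, EN, Real.rpow_one]
    have f1 : x ^ (θ + ν + 1) = P * Q * x := by rw [E, E, Real.rpow_one]
    have f2 : x ^ (ν + 1 - θ) = Q * x / P := by rw [ES, E, Real.rpow_one]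
    have f3 : x ^ (θ + ν) = P * Q := by rw [E]
    have f4 : x ^ (ν - θ) = Q / P := by rw [ES]
    rw [hHex]
    simp only [hH, (hFder x).deriv, (hGder x hx0).deriv, hGfun x, hF x, es, e1, e2, e3, e4,
      f1, f2, f3, f4, hc1, hc2, hc3, hc4]
    field_simp
    ring
  intro z hz
  have hz0 : (0:ℝ) < z := hz
  have hzne : z ≠ 0 := hz0.ne'
  have hder : deriv H z = deriv Hex z :=
    Filter.EventuallyEq.deriv_eq (Filter.eventuallyEq_of_mem (Ioi_mem_nhds hz0) hHeq)
  have hHexDer : HasDerivAt Hex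
      ((c1 * ((θ + ν + 1) * z ^ (θ + ν + 1 - 1)) + c2 * ((ν + 1 - θ) * z ^ (ν + 1 - θ - 1))
        + c3 * ((θ + ν) * z ^ (θ + ν - 1)) + c4 * ((ν - θ) * z ^ (ν - θ - 1))) / w) z := by
    exact ((((Real.hasDerivAt_rpow_const (x := z) (p := θ + ν + 1) (Or.inl hzne)).const_mul c1).add
      ((Real.hasDerivAt_rpow_const (x := z) (p := ν + 1 - θ) (Or.inl hzne)).const_mul c2) |>.add
      ((Real.hasDerivAt_rpow_const (x := z) (p := θ + ν) (Or.inl hzne)).const_mul c3) |>.add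
      ((Real.hasDerivAt_rpow_const (x := z) (p := ν - θ) (Or.inl hzne)).const_mul c4)).div_const w).add_const C
  rw [hder, hHexDer.deriv]
  -- now the algebraic identity
  have E : ∀ p q : ℝ, z ^ (p + q) = z ^ p * z ^ q := fun p q => Real.rpow_add hz0 p q
  have ES : ∀ p q : ℝ, z ^ (p - q) = z ^ p / z ^ q := fun p q => Real.rpow_sub hz0 p q
  have EN : ∀ p : ℝ, z ^ (-p) = (z ^ p)⁻¹ := fun p => Real.rpow_neg hz0.le p
  set P := z ^ θ with hP
  set Q := z ^ ν with hQ
  have hP0 : P ≠ 0 := (Real.rpow_pos_of_pos hz0 θ).ne'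
  have hQ0 : Q ≠ 0 := (Real.rpow_pos_of_pos hz0 ν).ne'
  have es : s' z = (Q * Q * z)⁻¹ := by
    rw [hs, show (-2 * ν - 1 : ℝ) = -ν + -ν + -1 by ring, E, E, EN, EN,
      Real.rpow_one, mul_inv, mul_inv]
  have g1 : z ^ (θ + ν + 1 - 1) = P * Q := by
    rw [show (θ + ν + 1 - 1 : ℝ) = θ + ν by ring, E]
  have g2 : z ^ (ν + 1 - θ - 1) = Q / P := by
    rw [show (ν + 1 - θ - 1 : ℝ) = ν - θ by ring, ES]
  have g3 : z ^ (θ + ν - 1) = P * Q / z := by rw [ES, E, Real.rpow_one]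
  have g4 : z ^ (ν - θ - 1) = Q / P / z := by rw [ES, ES, Real.rpow_one]
  have e1 : z ^ (θ - ν) = P / Q := by rw [ES]
  have e2 : z ^ (-θ - ν) = P⁻¹ / Q := by rw [ES, EN]
  -- coefficient identities
  have k1 : c1 * (θ + ν + 1) = 2 * (μ - r) / σ ^ 2 * A := by
    rw [hc1, ha]
    field_simp
    linear_combination ((r - μ) * A) * hν' - ((r - μ) * A) * hθ2'
  have k2 : c2 * (ν + 1 - θ) = -(2 * (μ - r) / σ ^ 2) * B := by
    rw [hc2, ha]
    field_simp
    linear_combination (-((r - μ) * B)) * hν' + ((r - μ) * B) * hθ2'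
  have k3 : c3 * (θ + ν) = 2 * (r * κ) / σ ^ 2 * A := by
    rw [hc3, hb]
    field_simp
    linear_combination (r * A) * hθ2'
  have k4 : c4 * (ν - θ) = -(2 * (r * κ) / σ ^ 2) * B := by
    rw [hc4, hb]
    field_simp
    linear_combination (-(r * B)) * hθ2'
  rw [hGfun z, es, e1, e2, g1, g2, g3, g4]
  rw [show c1 * ((θ + ν + 1) * (P * Q)) = (c1 * (θ + ν + 1)) * (P * Q) by ring, k1,
      show c2 * ((ν + 1 - θ) * (Q / P)) = (c2 * (ν + 1 - θ)) * (Q / P) by ring, k2,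
      show c3 * ((θ + ν) * (P * Q / z)) = (c3 * (θ + ν)) * (P * Q / z) by ring, k3,
      show c4 * ((ν - θ) * (Q / P / z)) = (c4 * (ν - θ)) * (Q / P / z) by ring, k4]
  field_simp
  ring
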